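/- arXiv:2007.03402 — 3 statements merged into one kernel-verified Lean document; each statement's English description precedes it below -/
import Mathlib

section
/- A minimal +k-substring and a minimal −k-substring of a binary word cannot intersect (share any index), for k ≥ 1. -/
/-- Balance of a binary word: number of 0s (false) minus number of 1s (true). -/
def bal (s : List Bool) : ℤ := (s.count false : ℤ) - (s.count true : ℤ)

/-- The substring x[i..j] (inclusive, 0-indexed). -/
def sub (x : List Bool) (i j : ℕ) : List Bool := (x.drop i).take (j + 1 - i)

/-- x[i,j] is a minimal substring: it contains no proper substring with the same balance. -/
def IsMinimal (x : List Bool) (i j : ℕ) : Prop :=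
  i ≤ j ∧ j < x.length ∧
    ∀ i' j', i ≤ i' → i' ≤ j' → j' ≤ j → (i', j') ≠ (i, j) →
      bal (sub x i' j') ≠ bal (sub x i j)

lemma bal_append (s t : List Bool) : bal (s ++ t) = bal s + bal t := by
  simp [bal, List.count_append]; ring

/-- Prefix balance function. -/
def pf (x : List Bool) (t : ℕ) : ℤ := bal (x.take t)

lemma bal_sub (x : List Bool) (a b : ℕ) (h : a ≤ b + 1) :
    bal (sub x a b) = pf x (b + 1) - pf x a := by
  rw [pf, pf, sub]
  set n := b + 1 - a with hn
  rw [show b + 1 = a + n by omega, List.take_add, bal_append]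
  ring

lemma abs_bal_le (s : List Bool) : |bal s| ≤ (s.length : ℤ) := by
  have h1 : s.count false ≤ s.length := List.count_le_length
  have h2 : s.count true ≤ s.length := List.count_le_length
  rw [bal, abs_le]
  constructor <;> [skip; skip] <;> push_cast <;> omega

lemma pf_step (x : List Bool) (t : ℕ) : |pf x (t + 1) - pf x t| ≤ 1 := by
  have h : x.take (t + 1) = x.take t ++ (x.drop t).take 1 := List.take_add
  rw [pf, pf, h, bal_append, add_sub_cancel_left]
  have := abs_bal_le ((x.drop t).take 1)
  have hl : ((x.drop t).take 1).length ≤ 1 := by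
    simpa using List.length_take_le 1 (x.drop t)
  calc |bal ((x.drop t).take 1)| ≤ (((x.drop t).take 1).length : ℤ) := this
    _ ≤ 1 := by exact_mod_cast hl

/-- Discrete intermediate value theorem (ascending). -/
lemma ivt_up (G : ℕ → ℤ) (hstep : ∀ t, |G (t + 1) - G t| ≤ 1) (a : ℕ) (c : ℤ) :
    ∀ n, G a ≤ c → c ≤ G (a + n) → ∃ s, a ≤ s ∧ s ≤ a + n ∧ G s = c := by
  intro n
  induction n with
  | zero => intro ha hb; exact ⟨a, le_rfl, by omega, le_antisymm ha hb⟩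
  | succ n ih =>
    intro ha hb
    by_cases hc : c ≤ G (a + n)
    · obtain ⟨s, hs1, hs2, hs3⟩ := ih ha hc
      exact ⟨s, hs1, by omega, hs3⟩
    · push_neg at hc
      have h1 : |G (a + n + 1) - G (a + n)| ≤ 1 := hstep (a + n)
      rw [abs_le] at h1
      have hb' : c ≤ G (a + n + 1) := by
        rwa [show a + n + 1 = a + (n + 1) by omega]
      have : G (a + n + 1) = c := by omega
      exact ⟨a + n + 1, by omega, by omega, this⟩

lemma ivt_up' (G : ℕ → ℤ) (hstep : ∀ t, |G (t + 1) - G t| ≤ 1) {a b : ℕ} (c : ℤ)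
    (hab : a ≤ b) (ha : G a ≤ c) (hb : c ≤ G b) : ∃ s, a ≤ s ∧ s ≤ b ∧ G s = c := by
  obtain ⟨n, rfl⟩ := Nat.le.dest hab
  exact ivt_up G hstep a c n ha hb

/-- Discrete intermediate value theorem (descending). -/
lemma ivt_down (G : ℕ → ℤ) (hstep : ∀ t, |G (t + 1) - G t| ≤ 1) {a b : ℕ} (c : ℤ)
    (hab : a ≤ b) (ha : c ≤ G a) (hb : G b ≤ c) : ∃ s, a ≤ s ∧ s ≤ b ∧ G s = c := by
  have hstep' : ∀ t, |(-G ·) (t + 1) - (-G ·) t| ≤ 1 := by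
    intro t
    show |(-G (t + 1)) - (-G t)| ≤ 1
    rw [show (-G (t + 1)) - (-G t) = G t - G (t + 1) by ring, abs_sub_comm]
    exact hstep t
  obtain ⟨s, hs1, hs2, hs3⟩ := ivt_up' (-G ·) hstep' (-c) hab (by simpa using ha) (by simpa using hb)
  exact ⟨s, hs1, hs2, by simpa using hs3⟩

lemma plus_lower (x : List Bool) (i j : ℕ) (k : ℕ) (hk : 1 ≤ k)
    (h : IsMinimal x i j) (hb : bal (sub x i j) = (k : ℤ)) :
    ∀ t, i < t → t ≤ j + 1 → pf x i < pf x t := by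
  intro t ht1 ht2
  by_contra hcon
  push_neg at hcon
  have hij : i ≤ j + 1 := by omega
  have hbal : pf x (j + 1) - pf x i = (k : ℤ) := by rw [← bal_sub x i j hij, hb]
  obtain ⟨s, hs1, hs2, hs3⟩ := ivt_up' (pf x) (pf_step x) (pf x i) ht2 hcon (by omega)
  have hsne : s ≠ j + 1 := by
    intro hEq; rw [hEq] at hs3; omega
  have hsj : s ≤ j := by omega
  refine h.2.2 s j (by omega) hsj le_rfl ?_ ?_
  · intro hEq
    have : s = i := (Prod.mk.injEq _ _ _ _ ▸ hEq).1
    omega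
  · rw [bal_sub x s j (by omega), hs3, hbal, hb]

lemma plus_upper (x : List Bool) (i j : ℕ) (k : ℕ) (hk : 1 ≤ k)
    (h : IsMinimal x i j) (hb : bal (sub x i j) = (k : ℤ)) :
    ∀ t, i ≤ t → t < j + 1 → pf x t < pf x (j + 1) := by
  intro t ht1 ht2
  by_contra hcon
  push_neg at hcon
  have hij : i ≤ j + 1 := by omega
  have hbal : pf x (j + 1) - pf x i = (k : ℤ) := by rw [← bal_sub x i j hij, hb]
  obtain ⟨s, hs1, hs2, hs3⟩ := ivt_up' (pf x) (pf_step x) (pf x i + k) ht1 (by omega) (by omega)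
  have hsne : s ≠ i := by
    intro hEq; rw [hEq] at hs3; omega
  have hs1' : i + 1 ≤ s := by omega
  refine h.2.2 i (s - 1) le_rfl (by omega) (by omega) ?_ ?_
  · intro hEq
    have : s - 1 = j := (Prod.mk.injEq _ _ _ _ ▸ hEq).2
    omega
  · have : s - 1 + 1 = s := by omega
    rw [bal_sub x i (s - 1) (by omega), this, hs3, hb]
    ring

lemma minus_upper (x : List Bool) (i j : ℕ) (k : ℕ) (hk : 1 ≤ k)
    (h : IsMinimal x i j) (hb : bal (sub x i j) = -(k : ℤ)) :
    ∀ t, i < t → t ≤ j + 1 → pf x t < pf x i := by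
  intro t ht1 ht2
  by_contra hcon
  push_neg at hcon
  have hij : i ≤ j + 1 := by omega
  have hbal : pf x (j + 1) - pf x i = -(k : ℤ) := by rw [← bal_sub x i j hij, hb]
  obtain ⟨s, hs1, hs2, hs3⟩ := ivt_down (pf x) (pf_step x) (pf x i) ht2 hcon (by omega)
  have hsne : s ≠ j + 1 := by
    intro hEq; rw [hEq] at hs3; omega
  have hsj : s ≤ j := by omega
  refine h.2.2 s j (by omega) hsj le_rfl ?_ ?_
  · intro hEq
    have : s = i := (Prod.mk.injEq _ _ _ _ ▸ hEq).1
    omega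
  · rw [bal_sub x s j (by omega), hs3, hbal, hb]

lemma minus_lower (x : List Bool) (i j : ℕ) (k : ℕ) (hk : 1 ≤ k)
    (h : IsMinimal x i j) (hb : bal (sub x i j) = -(k : ℤ)) :
    ∀ t, i ≤ t → t < j + 1 → pf x (j + 1) < pf x t := by
  intro t ht1 ht2
  by_contra hcon
  push_neg at hcon
  have hij : i ≤ j + 1 := by omega
  have hbal : pf x (j + 1) - pf x i = -(k : ℤ) := by rw [← bal_sub x i j hij, hb]
  obtain ⟨s, hs1, hs2, hs3⟩ := ivt_down (pf x) (pf_step x) (pf x i - k) ht1 (by omega) (by omega)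
  have hsne : s ≠ i := by
    intro hEq; rw [hEq] at hs3; omega
  refine h.2.2 i (s - 1) le_rfl (by omega) (by omega) ?_ ?_
  · intro hEq
    have : s - 1 = j := (Prod.mk.injEq _ _ _ _ ▸ hEq).2
    omega
  · have hss : s - 1 + 1 = s := by omega
    rw [bal_sub x i (s - 1) (by omega), hss, hs3, hb]
    ring

/-- A minimal +k-substring and a minimal −k-substring cannot intersect, for k ≥ 1. -/
theorem minimal_plus_minus_disjoint (x : List Bool) (k : ℕ) (hk : 1 ≤ k)
    (i j i' j' : ℕ)
    (h1 : IsMinimal x i j) (h2 : IsMinimal x i' j')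
    (hb1 : bal (sub x i j) = (k : ℤ)) (hb2 : bal (sub x i' j') = -(k : ℤ)) :
    ¬ ∃ t, i ≤ t ∧ t ≤ j ∧ i' ≤ t ∧ t ≤ j' := by
  rintro ⟨t, ht1, ht2, ht3, ht4⟩
  have hbal1 : pf x (j + 1) - pf x i = (k : ℤ) := by
    rw [← bal_sub x i j (by omega), hb1]
  have hbal2 : pf x (j' + 1) - pf x i' = -(k : ℤ) := by
    rw [← bal_sub x i' j' (by omega), hb2]
  have PA := plus_lower x i j k hk h1 hb1
  have PB := plus_upper x i j k hk h1 hb1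
  have MC := minus_upper x i' j' k hk h2 hb2
  have MD := minus_lower x i' j' k hk h2 hb2
  rcases le_or_gt i i' with hii | hii <;> rcases le_or_gt j' j with hjj | hjj
  · -- Case A: i ≤ i', j' ≤ j
    have f1 : pf x i' < pf x (j + 1) := PB i' hii (by omega)
    have f2 : pf x i < pf x (j' + 1) := PA (j' + 1) (by omega) (by omega)
    omega
  · -- i ≤ i', j < j'
    rcases hii.lt_or_eq with hlt | hEq
    · -- Case C
      have f1 : pf x i' < pf x (j + 1) := PB i' (le_of_lt hlt) (by omega)
      have f2 : pf x (j + 1) < pf x i' := MC (j + 1) (by omega) (by omega)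
      omega
    · -- i = i', j ≤ j': Case B
      have f1 : pf x (j + 1) < pf x i' := MC (j + 1) (by omega) (by omega)
      have f2 : pf x (j' + 1) < pf x i := MD i (by omega) (by omega)
      omega
  · -- i' < i, j' ≤ j
    rcases hjj.lt_or_eq with hlt | hEq
    · -- Case D
      have f1 : pf x i < pf x (j' + 1) := PA (j' + 1) (by omega) (by omega)
      have f2 : pf x (j' + 1) < pf x i := MD i (by omega) (by omega)
      omega
    · -- j' = j: Case B
      have f1 : pf x (j + 1) < pf x i' := MC (j + 1) (by omega) (by omega)
      have f2 : pf x (j' + 1) < pf x i := MD i (by omega) (by omega)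
      omega
  · -- Case B: i' < i, j < j'
    have f1 : pf x (j + 1) < pf x i' := MC (j + 1) (by omega) (by omega)
    have f2 : pf x (j' + 1) < pf x i := MD i (by omega) (by omega)
    omega
end

section
/- Define blocks recursively: a (w,h)-block is a binary string B of even length w such that every prefix p of B satisfies 0 ≤ f(p) ≤ h, and f(B) ∈ {0, 2}, where f counts 0s minus 1s. If B1, …, B_{2m} are (w,h)-blocks and exactly m or m+1 of them have f(B_i) = 2, then B' = B1 B2 ⋯ B_{2m} 1^{2m} is a (2m(w+1), 2(m+1)+h)-block; moreover f(B') = 2 if m+1 of the B_i have balance 2, and f(B') = 0 if exactly m of them do. -/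
/-- A (w,h)-block: a binary string of even length w, all prefix balances in [0,h],
total balance 0 or 2. -/
def IsBlock (B : List Bool) (w h : ℕ) : Prop :=
  B.length = w ∧ Even w ∧ (∀ p, p <+: B → 0 ≤ bal p ∧ bal p ≤ (h : ℤ)) ∧
    (bal B = 0 ∨ bal B = 2)

lemma bal_nil : bal [] = 0 := by simp [bal]

lemma bal_replicate_true (n : ℕ) : bal (List.replicate n true) = -(n : ℤ) := by
  simp [bal, List.count_replicate]

lemma prefix_append_cases {α : Type*} {p a b : List α} (h : p <+: a ++ b) :
    p <+: a ∨ ∃ q, q <+: b ∧ p = a ++ q := by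
  obtain ⟨t, ht⟩ := h
  rcases le_or_gt p.length a.length with hle | hlt
  · left
    have : p = (a ++ b).take p.length := by
      rw [← ht, List.take_append_of_le_length le_rfl, List.take_length]
    rw [this, List.take_append_of_le_length hle]
    exact List.take_prefix _ _
  · right
    have hto : a.length ≤ p.length := hlt.le
    have ha : p.take a.length = a := by
      have h2 : (p ++ t).take a.length = a := by
        rw [ht, List.take_append_of_le_length le_rfl, List.take_length]
      rwa [List.take_append_of_le_length hto] at h2
    refine ⟨p.drop a.length, ⟨t, ?_⟩, ?_⟩
    · have h3 := ht
      conv_lhs at h3 => rw [← List.take_append_drop a.length p, ha, List.append_assoc]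
      exact List.append_cancel_left h3
    · conv_lhs => rw [← List.take_append_drop a.length p, ha]

lemma bal_join (L : List (List Bool)) : bal L.flatten = (L.map bal).sum := by
  induction L with
  | nil => simp [bal]
  | cons B L ih => simp [List.flatten_cons, bal_append, ih]

lemma join_prefix_bounds (w h : ℕ) (L : List (List Bool))
    (hL : ∀ B ∈ L, IsBlock B w h) :
    (0 ≤ (L.map bal).sum) ∧
    ∀ p, p <+: L.flatten → 0 ≤ bal p ∧ bal p ≤ (L.map bal).sum + h := by
  induction L with
  | nil =>
    refine ⟨le_rfl, fun p hp => ?_⟩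
    simp only [List.flatten_nil, List.prefix_nil] at hp
    subst hp
    simp [bal_nil]
  | cons B L ih =>
    have hBblk := hL B (by simp)
    obtain ⟨_, _, hpre, hbal⟩ := hBblk
    have hBnn : 0 ≤ bal B := by rcases hbal with h0 | h2 <;> omega
    obtain ⟨ihnn, ihpre⟩ := ih (fun C hC => hL C (by simp [hC]))
    constructor
    · simp only [List.map_cons, List.sum_cons]
      positivity
    · intro p hp
      simp only [List.flatten_cons] at hp
      rcases prefix_append_cases hp with hp1 | ⟨q, hq, rfl⟩
      · obtain ⟨h0, hh⟩ := hpre p hp1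
        refine ⟨h0, ?_⟩
        simp only [List.map_cons, List.sum_cons]
        have : bal p ≤ (h : ℤ) := hh
        linarith
      · obtain ⟨hq0, hqh⟩ := ihpre q hq
        rw [bal_append]
        simp only [List.map_cons, List.sum_cons]
        constructor
        · positivity
        · linarith

/-- Concatenating 2m blocks of which exactly m or m+1 have balance 2, followed by 1^{2m},
yields a (2m(w+1), 2(m+1)+h)-block whose balance reflects the EXACT-m/m+1 count. -/
theorem block_composition (m w h : ℕ) (Bs : Fin (2 * m) → List Bool)
    (hB : ∀ i, IsBlock (Bs i) w h)
    (c : ℕ) (hc : c = (Finset.univ.filter (fun i => bal (Bs i) = 2)).card)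
    (hcm : c = m ∨ c = m + 1) :
    IsBlock ((List.ofFn Bs).flatten ++ List.replicate (2 * m) true)
        (2 * m * (w + 1)) (2 * (m + 1) + h) ∧
    (c = m + 1 → bal ((List.ofFn Bs).flatten ++ List.replicate (2 * m) true) = 2) ∧
    (c = m → bal ((List.ofFn Bs).flatten ++ List.replicate (2 * m) true) = 0) := by
  -- total balance of the join
  have hsum : ((List.ofFn Bs).map bal).sum = 2 * (c : ℤ) := by
    have hmap : (List.ofFn Bs).map bal = List.ofFn (fun i => bal (Bs i)) := by
      rw [List.map_ofFn]; rfl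
    rw [hmap, List.sum_ofFn, hc]
    rw [← Finset.sum_filter_add_sum_filter_not Finset.univ (fun i => bal (Bs i) = 2)]
    have h1 : ∑ i ∈ Finset.univ.filter (fun i => bal (Bs i) = 2), bal (Bs i)
        = ∑ _i ∈ Finset.univ.filter (fun i => bal (Bs i) = 2), (2 : ℤ) :=
      Finset.sum_congr rfl (fun i hi => (Finset.mem_filter.mp hi).2)
    have h2 : ∑ i ∈ Finset.univ.filter (fun i => ¬ bal (Bs i) = 2), bal (Bs i) = 0 :=
      Finset.sum_eq_zero (fun i hi => by
        rcases (hB i).2.2.2 with h0 | h2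
        · exact h0
        · exact absurd h2 (Finset.mem_filter.mp hi).2)
    rw [h1, h2, Finset.sum_const, add_zero, nsmul_eq_mul]
    push_cast
    ring
  have hbal_total : bal ((List.ofFn Bs).flatten ++ List.replicate (2 * m) true)
      = 2 * (c : ℤ) - 2 * (m : ℤ) := by
    rw [bal_append, bal_join, hsum, bal_replicate_true]
    push_cast
    ring
  have hcle : (m : ℤ) ≤ (c : ℤ) ∧ (c : ℤ) ≤ (m : ℤ) + 1 := by
    rcases hcm with rfl | rfl <;> constructor <;> push_cast <;> omega
  obtain ⟨hpb_nn, hpb⟩ := join_prefix_bounds w h (List.ofFn Bs)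
    (fun B hBmem => by
      obtain ⟨i, rfl⟩ := List.mem_ofFn.mp hBmem
      exact hB i)
  refine ⟨⟨?_, ?_, ?_, ?_⟩, ?_, ?_⟩
  · -- length
    rw [List.length_append, List.length_flatten, List.length_replicate]
    have : (List.ofFn Bs).map List.length = List.ofFn (fun i => (Bs i).length) := by
      rw [List.map_ofFn]; rfl
    rw [this]
    have : (fun i : Fin (2 * m) => (Bs i).length) = fun _ => w :=
      funext fun i => (hB i).1
    rw [this, List.sum_ofFn, Finset.sum_const, Finset.card_univ, Fintype.card_fin,
      smul_eq_mul]
    ring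
  · exact ⟨m * (w + 1), by ring⟩
  · -- prefix bounds
    intro p hp
    rcases prefix_append_cases hp with hp1 | ⟨q, hq, rfl⟩
    · obtain ⟨h0, hh⟩ := hpb p hp1
      refine ⟨h0, ?_⟩
      rw [hsum] at hh
      push_cast
      omega
    · -- q is a prefix of the replicate block
      have hqmem : ∀ b ∈ q, b = true := fun b hb => by
        have := hq.sublist.subset hb
        simpa using (List.eq_of_mem_replicate this)
      have hqrep : q = List.replicate q.length true :=
        List.eq_replicate_length.mpr hqmem
      have hqlen : q.length ≤ 2 * m := by
        have := hq.length_le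
        simpa using this
      rw [bal_append, bal_join, hsum, hqrep, bal_replicate_true]
      obtain ⟨hc1, hc2⟩ := hcle
      constructor <;> push_cast <;> omega
  · -- total balance is 0 or 2
    rw [hbal_total]
    rcases hcm with rfl | rfl
    · left; push_cast; ring
    · right; push_cast; ring
  · intro hceq
    rw [hbal_total, hceq]
    push_cast; ring
  · intro hceq
    rw [hbal_total, hceq]
    push_cast; ring
end

section
/- Define L(0,κ) = (κ+1)² and L(μ,κ) = 2·Σ_{r=0}^{κ} L(μ−1, r) for μ ≥ 1. Then for all μ ≥ 0 and κ ≥ 0, L(μ,κ) < 2^{μ+1} · C(κ+μ+2, κ), where C denotes the binomial coefficient. -/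
/-- Size of the AND-OR formula for directed connectivity in a 2^μ × κ grid. -/
def L : ℕ → ℕ → ℕ
  | 0, κ => (κ + 1) ^ 2
  | (μ + 1), κ => 2 * ∑ r ∈ Finset.range (κ + 1), L μ r

/-- Hockey stick identity. -/
lemma hockey (m k : ℕ) :
    ∑ r ∈ Finset.range (k + 1), Nat.choose (m + r) r = Nat.choose (m + k + 1) k := by
  induction k with
  | zero => simp
  | succ k ih =>
      rw [Finset.sum_range_succ, ih, show m + (k+1) = m + k + 1 from by omega]
      exact (Nat.choose_succ_succ' (m + k + 1) k).symm

/-- L(μ,κ) < 2^{μ+1} · C(κ+μ+2, κ). -/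
theorem formula_size_bound (μ κ : ℕ) :
    L μ κ < 2 ^ (μ + 1) * Nat.choose (κ + μ + 2) κ := by
  induction μ generalizing κ with
  | zero =>
      have h1 : (κ + 2).choose κ = (κ + 2).choose 2 := by
        rw [← Nat.choose_symm (by omega)]
        congr 1
        omega
      have h2 : (κ + 2).choose 2 = (κ + 2) * (κ + 1) / 2 := by
        rw [Nat.choose_two_right]; congr 1
      have hdvd : 2 ∣ (κ + 2) * (κ + 1) := by
        obtain ⟨c, hc⟩ := Nat.even_mul_succ_self (κ + 1)
        exact ⟨c, by nlinarith⟩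
      have : 2 ^ (0 + 1) * (κ + 0 + 2).choose κ = (κ + 2) * (κ + 1) := by
        simp only [Nat.add_zero, Nat.zero_add, pow_one]
        rw [h1, h2, Nat.mul_div_cancel' hdvd]
      rw [this]
      have : L 0 κ = (κ + 1) ^ 2 := rfl
      rw [this]
      nlinarith
  | succ μ ih =>
      have hL : L (μ + 1) κ = 2 * ∑ r ∈ Finset.range (κ + 1), L μ r := rfl
      rw [hL]
      have hs : ∑ r ∈ Finset.range (κ + 1), L μ r <
          ∑ r ∈ Finset.range (κ + 1), 2 ^ (μ + 1) * Nat.choose (r + μ + 2) r := by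
        apply Finset.sum_lt_sum_of_nonempty (Finset.nonempty_range_add_one)
        intro i _
        exact ih i
      have hsum : ∑ r ∈ Finset.range (κ + 1), 2 ^ (μ + 1) * Nat.choose (r + μ + 2) r
          = 2 ^ (μ + 1) * Nat.choose (κ + μ + 3) κ := by
        rw [← Finset.mul_sum]
        congr 1
        have := hockey (μ + 2) κ
        rw [show μ + 2 + κ + 1 = κ + μ + 3 from by omega] at this
        rw [← this]
        apply Finset.sum_congr rfl
        intro r _
        congr 1
        omega
      calc 2 * ∑ r ∈ Finset.range (κ + 1), L μ r
          < 2 * (2 ^ (μ + 1) * Nat.choose (κ + μ + 3) κ) := by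
            rw [← hsum]; omega
        _ = 2 ^ (μ + 1 + 1) * Nat.choose (κ + (μ + 1) + 2) κ := by
            rw [show κ + (μ + 1) + 2 = κ + μ + 3 from by omega]
            ring
end
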